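/- Let X be an arithmetic scheme whose underlying topological space has Krull dimension at most 1. Then the set X(ℂ) of scheme morphisms Spec ℂ → X is finite. -/

import Mathlib

open AlgebraicGeometry CategoryTheory

set_option maxHeartbeats 1000000
set_option synthInstance.maxHeartbeats 400000

section AuxAlgebra


instance : IsJacobsonRing ℤ := by
  rw [isJacobsonRing_iff_prime_eq]
  intro P hP
  rcases eq_or_ne P ⊥ with rfl | h
  · ext x
    simp only [Ideal.mem_jacobson_bot, Ideal.mem_bot]
    constructor
    · intro hx
      rcases Int.isUnit_iff.mp (hx x) with h1 | h1 <;> nlinarith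
    · rintro rfl; intro y; simp
  · haveI := IsPrime.to_maximal_ideal (hpi := hP) h
    exact Ideal.jacobson_eq_self_of_isMaximal

lemma not_charZero_quot (A : Type) [CommRing A] [Algebra.FiniteType ℤ A]
    (m : Ideal A) [m.IsMaximal] : ¬ CharZero (A ⧸ m) := by
  intro hc
  letI : Field (A ⧸ m) := Ideal.Quotient.field m
  have hft : Algebra.FiniteType ℤ (A ⧸ m) :=
    Algebra.FiniteType.of_surjective (Ideal.Quotient.mkₐ ℤ m) Ideal.Quotient.mk_surjective
  have hfin : Module.Finite ℤ (A ⧸ m) := finite_of_finite_type_of_isJacobsonRing ℤ _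
  have hNoeth : IsNoetherian ℤ (A ⧸ m) := isNoetherian_of_isNoetherianRing_of_finite ℤ _
  set g := (algebraMap ℚ (A ⧸ m)).toIntAlgHom.toLinearMap with hg
  have hginj : Function.Injective g := (algebraMap ℚ (A ⧸ m)).injective
  have hN : Module.Finite ℤ ↥(LinearMap.range g) :=
    Module.Finite.iff_fg.mpr (IsNoetherian.noetherian _)
  have : Module.Finite ℤ ℚ := Module.Finite.equiv (LinearEquiv.ofInjective g hginj).symm
  have : Algebra.IsIntegral ℤ ℚ := Algebra.IsIntegral.of_finite ℤ ℚ
  obtain ⟨n, hn⟩ :=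
    IsIntegrallyClosed.isIntegral_iff.mp (Algebra.IsIntegral.isIntegral (R := ℤ) (1/2 : ℚ))
  rw [algebraMap_int_eq, eq_intCast] at hn
  have h2 : ((2 * n : ℤ) : ℚ) = 1 := by push_cast; linarith
  have h3 : (2 * n : ℤ) = 1 := by exact_mod_cast h2
  omega

lemma chain_dim {A : Type} [CommRing A] (hdim : ringKrullDim A ≤ 1) {p q r : Ideal A}
    (hp : p.IsPrime) (hq : q.IsPrime) (hr : r.IsPrime) (h1 : p < q) (h2 : q < r) : False := by
  let s : LTSeries (PrimeSpectrum A) :=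
    ⟨2, ![⟨p, hp⟩, ⟨q, hq⟩, ⟨r, hr⟩], by
      intro i
      fin_cases i
      · exact h1
      · exact h2⟩
  have h3 := Order.LTSeries.length_le_krullDim s
  rw [show Order.krullDim (PrimeSpectrum A) = ringKrullDim A from rfl] at h3
  have : ((2 : ℕ) : WithBot ℕ∞) ≤ 1 := le_trans h3 hdim
  norm_num at this

/-- Zariski's lemma packaged: a f.g. `ℚ`-algebra which is a field is integral over `ℚ`. -/
lemma integral_of_isField_of_ft (K : Type) [CommRing K] [Algebra ℚ K] (hKf : IsField K)
    (hft : Algebra.FiniteType ℚ K) (x : K) : IsIntegral ℚ x := by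
  haveI := hft
  haveI : Module.Finite ℚ K := @finite_of_finite_type_of_isJacobsonRing ℚ K _ hKf.toField _ _ _
  haveI : Algebra.IsIntegral ℚ K := Algebra.IsIntegral.of_finite ℚ K
  exact Algebra.IsIntegral.isIntegral x

lemma isAlgebraic_quot (A : Type) [CommRing A] [Algebra.FiniteType ℤ A]
    (hdim : ringKrullDim A ≤ 1) (p : Ideal A) [p.IsPrime] [CharZero (A ⧸ p)]
    (d : A ⧸ p) : IsAlgebraic ℤ d := by
  classical
  haveI hDft : Algebra.FiniteType ℤ (A ⧸ p) :=
    Algebra.FiniteType.of_surjective (Ideal.Quotient.mkₐ ℤ p) Ideal.Quotient.mk_surjective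
  have hinj : Function.Injective (algebraMap (A ⧸ p) (FractionRing (A ⧸ p))) :=
    IsFractionRing.injective _ _
  haveI : CharZero (FractionRing (A ⧸ p)) := charZero_of_injective_algebraMap hinj
  haveI := IsScalarTower.of_algebraMap_eq' (R := ℤ) (S := ℚ)
    (A := FractionRing (A ⧸ p)) (Subsingleton.elim _ _)
  set K : Subalgebra ℚ (FractionRing (A ⧸ p)) :=
    Algebra.adjoin ℚ (Set.range (algebraMap (A ⧸ p) (FractionRing (A ⧸ p)))) with hK
  -- denominator clearing in `K`
  have key : ∀ y : FractionRing (A ⧸ p), y ∈ K →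
      ∃ (c : A ⧸ p) (n : ℤ), n ≠ 0 ∧ (n : FractionRing (A ⧸ p)) * y
        = algebraMap (A ⧸ p) (FractionRing (A ⧸ p)) c := by
    intro y hy
    induction hy using Algebra.adjoin_induction with
    | mem x hx =>
      obtain ⟨c, rfl⟩ := hx
      exact ⟨c, 1, one_ne_zero, by simp⟩
    | algebraMap r =>
      refine ⟨(r.num : A ⧸ p), (r.den : ℤ), by exact_mod_cast r.den_ne_zero, ?_⟩
      have hden : ((r.den : ℕ) : FractionRing (A ⧸ p)) ≠ 0 :=
        Nat.cast_ne_zero.mpr r.den_ne_zero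
      rw [map_intCast, eq_ratCast, Rat.cast_def]
      push_cast
      field_simp
    | add x y hx hy ihx ihy =>
      obtain ⟨c1, n1, h1, e1⟩ := ihx
      obtain ⟨c2, n2, h2, e2⟩ := ihy
      refine ⟨(n2 : A ⧸ p) * c1 + (n1 : A ⧸ p) * c2, n1 * n2, mul_ne_zero h1 h2, ?_⟩
      have hexp : ((n1 * n2 : ℤ) : FractionRing (A ⧸ p)) * (x + y)
          = (n2 : FractionRing (A ⧸ p)) * ((n1 : FractionRing (A ⧸ p)) * x)
            + (n1 : FractionRing (A ⧸ p)) * ((n2 : FractionRing (A ⧸ p)) * y) := by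
        push_cast; ring
      rw [hexp, e1, e2]
      simp [map_add, map_mul, map_intCast]
    | mul x y hx hy ihx ihy =>
      obtain ⟨c1, n1, h1, e1⟩ := ihx
      obtain ⟨c2, n2, h2, e2⟩ := ihy
      refine ⟨c1 * c2, n1 * n2, mul_ne_zero h1 h2, ?_⟩
      have hexp : ((n1 * n2 : ℤ) : FractionRing (A ⧸ p)) * (x * y)
          = ((n1 : FractionRing (A ⧸ p)) * x) * ((n2 : FractionRing (A ⧸ p)) * y) := by
        push_cast; ring
      rw [hexp, e1, e2, map_mul]
  -- `K` is a finitely generated `ℚ`-algebra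
  obtain ⟨t, ht⟩ := hDft.out
  have hKgen : K = Algebra.adjoin ℚ ((algebraMap (A ⧸ p) (FractionRing (A ⧸ p))) '' ↑t) := by
    apply le_antisymm
    · rw [hK]
      apply Algebra.adjoin_le
      rintro x ⟨c, rfl⟩
      have hc : c ∈ Algebra.adjoin ℤ (↑t : Set (A ⧸ p)) := by rw [ht]; trivial
      induction hc using Algebra.adjoin_induction with
      | mem z hz => exact Algebra.subset_adjoin (Set.mem_image_of_mem _ hz)
      | algebraMap n =>
        rw [eq_intCast (algebraMap ℤ (A ⧸ p)), map_intCast]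
        exact Subalgebra.intCast_mem _ n
      | add a b ha hb iha ihb => rw [map_add]; exact add_mem iha ihb
      | mul a b ha hb iha ihb => rw [map_mul]; exact mul_mem iha ihb
    · apply Algebra.adjoin_le
      rintro x ⟨c, _, rfl⟩
      exact Algebra.subset_adjoin ⟨c, rfl⟩
  have hKfg : Algebra.FiniteType ℚ ↥K := by
    rw [← Subalgebra.fg_iff_finiteType]
    exact ⟨t.image (algebraMap (A ⧸ p) (FractionRing (A ⧸ p))),
      by rw [Finset.coe_image, ← hKgen]⟩
  have hdK : algebraMap (A ⧸ p) (FractionRing (A ⧸ p)) d ∈ K := Algebra.subset_adjoin ⟨d, rfl⟩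
  by_cases hKf : IsField ↥K
  · have hint : IsIntegral ℚ (⟨algebraMap (A ⧸ p) (FractionRing (A ⧸ p)) d, hdK⟩ : ↥K) :=
      integral_of_isField_of_ft ↥K hKf hKfg _
    have hint2 : IsIntegral ℚ (algebraMap (A ⧸ p) (FractionRing (A ⧸ p)) d) := by
      have := hint.map K.val
      simpa using this
    have halg : IsAlgebraic ℚ (algebraMap (A ⧸ p) (FractionRing (A ⧸ p)) d) := hint2.isAlgebraic
    have halg2 : IsAlgebraic ℤ (algebraMap (A ⧸ p) (FractionRing (A ⧸ p)) d) :=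
      (IsFractionRing.isAlgebraic_iff ℤ ℚ (FractionRing (A ⧸ p))).mpr halg
    exact (isAlgebraic_algebraMap_iff hinj).mp halg2
  · exfalso
    obtain ⟨I, hbot, htop⟩ := Ring.not_isField_iff_exists_ideal_bot_lt_and_lt_top.mp hKf
    obtain ⟨m, hm, hIm⟩ := Ideal.exists_le_maximal I htop.ne
    haveI : m.IsPrime := hm.isPrime
    let ρ : (A ⧸ p) →+* ↥K := (algebraMap (A ⧸ p) (FractionRing (A ⧸ p))).codRestrict K.toSubring
      (fun x => Algebra.subset_adjoin (Set.mem_range_self x))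
    haveI hq : (Ideal.comap ρ m).IsPrime := Ideal.IsPrime.comap ρ
    set P : Ideal A := Ideal.comap (Ideal.Quotient.mk p) (Ideal.comap ρ m) with hP
    haveI hPp : P.IsPrime := Ideal.IsPrime.comap _
    obtain ⟨y, hym, hy0⟩ : ∃ y ∈ m, y ≠ (0 : ↥K) := by
      obtain ⟨y, hym, hyb⟩ := SetLike.exists_of_lt (lt_of_lt_of_le hbot hIm)
      exact ⟨y, hym, by simpa [Ideal.mem_bot] using hyb⟩
    obtain ⟨c, n, hn0, hEq⟩ := key (y : FractionRing (A ⧸ p)) y.2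
    have hc0 : c ≠ 0 := by
      intro h
      rw [h, map_zero] at hEq
      have hnF : ((n : ℤ) : FractionRing (A ⧸ p)) ≠ 0 := Int.cast_ne_zero.mpr hn0
      have : (y : FractionRing (A ⧸ p)) = 0 := by
        rcases mul_eq_zero.mp hEq with h' | h'
        · exact absurd h' hnF
        · exact h'
      exact hy0 (Subtype.ext this)
    have hρ : ρ c = (n : ↥K) * y := by
      apply Subtype.ext
      have hcast : (((n : ↥K) * y : ↥K) : FractionRing (A ⧸ p))
          = (n : FractionRing (A ⧸ p)) * (y : FractionRing (A ⧸ p)) := by push_cast; ring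
      rw [hcast, hEq]
      rfl
    have hcm : c ∈ Ideal.comap ρ m := by
      rw [Ideal.mem_comap, hρ]
      exact Ideal.mul_mem_left _ _ hym
    obtain ⟨a, ha⟩ := Ideal.Quotient.mk_surjective (I := p) c
    have hpP : p < P := by
      have hle : p ≤ P := fun x hx => by
        rw [hP, Ideal.mem_comap, Ideal.Quotient.eq_zero_iff_mem.mpr hx]
        exact Ideal.zero_mem _
      refine lt_of_le_of_ne hle (fun h => ?_)
      have haP : a ∈ P := by rw [hP, Ideal.mem_comap, ha]; exact hcm
      rw [← h] at haP
      exact hc0 (by rw [← ha, Ideal.Quotient.eq_zero_iff_mem]; exact haP)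
    have hPnm : ¬ P.IsMaximal := by
      intro hmax
      apply not_charZero_quot A P
      have hinjP : Function.Injective (algebraMap ℤ (A ⧸ P)) := by
        rw [RingHom.injective_iff_ker_eq_bot, eq_bot_iff]
        intro k hk
        simp only [RingHom.mem_ker] at hk
        rw [Ideal.mem_bot]
        by_contra hk0
        rw [eq_intCast (algebraMap ℤ (A ⧸ P))] at hk
        have hkP : (k : A) ∈ P := by
          rw [← Ideal.Quotient.eq_zero_iff_mem, map_intCast]
          exact hk
        have h1 : ((k : ℤ) : A ⧸ p) ∈ Ideal.comap ρ m := by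
          rw [hP, Ideal.mem_comap] at hkP
          rwa [map_intCast] at hkP
        have h2 : ρ ((k : ℤ) : A ⧸ p) ∈ m := Ideal.mem_comap.mp h1
        rw [map_intCast] at h2
        have hku : IsUnit ((k : ℤ) : ↥K) := by
          have hmk : (algebraMap ℚ ↥K) ((k : ℤ) : ℚ) = ((k : ℤ) : ↥K) := map_intCast _ _
          rw [← hmk]
          exact IsUnit.map _ (isUnit_iff_ne_zero.mpr (by exact_mod_cast hk0))
        exact hm.ne_top (Ideal.eq_top_of_isUnit_mem m h2 hku)
      exact charZero_of_injective_algebraMap hinjP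
    obtain ⟨m', hm'max, hPm'⟩ := Ideal.exists_le_maximal P hPp.ne_top
    have hPm'lt : P < m' := lt_of_le_of_ne hPm' (fun h => hPnm (h ▸ hm'max))
    exact chain_dim hdim ‹p.IsPrime› hPp hm'max.isPrime hpP hPm'lt



/-- A ring admitting a homomorphism to `ℂ` has characteristic zero. -/
lemma charZero_of_hom {D : Type} [CommRing D] (ψ : D →+* ℂ) : CharZero D :=
  ⟨fun a b h => Nat.cast_injective (R := ℂ) (by rw [← map_natCast ψ, h, map_natCast])⟩

lemma finite_homs_quot (A : Type) [CommRing A] [Algebra.FiniteType ℤ A]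
    (hdim : ringKrullDim A ≤ 1) (p : Ideal A) [p.IsPrime] [CharZero (A ⧸ p)] :
    Finite ((A ⧸ p) →+* ℂ) := by
  classical
  have halg : ∀ d : A ⧸ p, IsAlgebraic ℤ d := isAlgebraic_quot A hdim p
  haveI hDft : Algebra.FiniteType ℤ (A ⧸ p) :=
    Algebra.FiniteType.of_surjective (Ideal.Quotient.mkₐ ℤ p) Ideal.Quotient.mk_surjective
  obtain ⟨t, ht⟩ := hDft.out
  choose poly hpoly0 hpolyeval using halg
  have memroot : ∀ (ψ : (A ⧸ p) →+* ℂ) (x : A ⧸ p), ψ x ∈ (poly x).rootSet ℂ := by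
    intro ψ x
    rw [Polynomial.mem_rootSet]
    refine ⟨hpoly0 x, ?_⟩
    have := Polynomial.aeval_algHom_apply ψ.toIntAlgHom x (poly x)
    rw [hpolyeval x] at this
    simpa using this
  refine Finite.of_injective
    (fun ψ : (A ⧸ p) →+* ℂ => fun x : ↥(↑t : Set (A ⧸ p)) =>
      (⟨ψ x, memroot ψ x⟩ : (poly (x : A ⧸ p)).rootSet ℂ)) ?_
  intro ψ₁ ψ₂ h
  refine RingHom.ext fun d => ?_
  have hd : d ∈ Algebra.adjoin ℤ (↑t : Set (A ⧸ p)) := by rw [ht]; trivial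
  induction hd using Algebra.adjoin_induction with
  | mem z hz =>
    have := congrFun h ⟨z, hz⟩
    exact Subtype.ext_iff.mp this
  | algebraMap n => rw [eq_intCast (algebraMap ℤ (A ⧸ p)), map_intCast, map_intCast]
  | add a b ha hb iha ihb => rw [map_add, map_add, iha, ihb]
  | mul a b ha hb iha ihb => rw [map_mul, map_mul, iha, ihb]

lemma finite_ringHom_complex (A : Type) [CommRing A] (hft : Algebra.FiniteType ℤ A)
    (hdim : ringKrullDim A ≤ 1) : Finite (A →+* ℂ) := by
  classical
  haveI := hft
  haveI : IsNoetherianRing A := Algebra.FiniteType.isNoetherianRing ℤ A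
  have hker : ∀ φ : A →+* ℂ, RingHom.ker φ ∈ minimalPrimes A := by
    intro φ
    haveI hkp : (RingHom.ker φ).IsPrime := RingHom.ker_isPrime φ
    haveI hCZ : CharZero (A ⧸ RingHom.ker φ) := charZero_of_hom (RingHom.kerLift φ)
    have hnmax : ¬ (RingHom.ker φ).IsMaximal := fun h => not_charZero_quot A _ hCZ
    obtain ⟨q, hq, hqle⟩ := Ideal.exists_minimalPrimes_le (bot_le (a := RingHom.ker φ))
    rcases eq_or_lt_of_le hqle with rfl | hlt
    · exact hq
    · exfalso
      obtain ⟨m, hmmax, hm⟩ := Ideal.exists_le_maximal _ hkp.ne_top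
      have hltm : RingHom.ker φ < m := lt_of_le_of_ne hm (fun h => hnmax (h ▸ hmmax))
      exact chain_dim hdim hq.1.1 hkp hmmax.isPrime hlt hltm
  have hfin : (minimalPrimes A).Finite := minimalPrimes.finite_of_isNoetherianRing A
  haveI : Finite ↥(minimalPrimes A) := hfin.to_subtype
  haveI hfib : ∀ q : ↥(minimalPrimes A), Finite ((A ⧸ (q : Ideal A)) →+* ℂ) := by
    intro q
    haveI : (q : Ideal A).IsPrime := q.2.1.1
    rcases isEmpty_or_nonempty ((A ⧸ (q : Ideal A)) →+* ℂ) with h | ⟨⟨ψ⟩⟩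
    · exact Finite.of_subsingleton
    · haveI : CharZero (A ⧸ (q : Ideal A)) := charZero_of_hom ψ
      exact finite_homs_quot A hdim _
  let Ψ : (A →+* ℂ) → Σ q : ↥(minimalPrimes A), ((A ⧸ (q : Ideal A)) →+* ℂ) :=
    fun φ => ⟨⟨RingHom.ker φ, hker φ⟩, RingHom.kerLift φ⟩
  have hleft : ∀ φ : A →+* ℂ, ((Ψ φ).2).comp (Ideal.Quotient.mk ((Ψ φ).1 : Ideal A)) = φ := by
    intro φ
    ext x
    simp [Ψ]
  refine Finite.of_injective Ψ (fun φ₁ φ₂ h => ?_)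
  rw [← hleft φ₁, ← hleft φ₂, h]

section AuxTopology


/-- The topological Krull dimension is monotone under embeddings. -/
lemma topologicalKrullDim_le_of_isEmbedding {X Y : Type*} [TopologicalSpace X]
    [TopologicalSpace Y] (f : X → Y) (hf : Topology.IsEmbedding f) :
    topologicalKrullDim X ≤ topologicalKrullDim Y := by
  have key : ∀ c : TopologicalSpace.IrreducibleCloseds X, c.carrier = f ⁻¹' closure (f '' c.carrier) := by
    intro c
    conv_lhs => rw [← c.isClosed'.closure_eq]
    exact hf.toIsInducing.closure_eq_preimage_closure_image c.carrier
  refine Order.krullDim_le_of_strictMono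
    (fun c : TopologicalSpace.IrreducibleCloseds X =>
      (⟨closure (f '' c.carrier),
        (c.isIrreducible'.image f hf.continuous.continuousOn).closure,
        isClosed_closure⟩ : TopologicalSpace.IrreducibleCloseds Y)) ?_
  intro a b hab
  refine lt_of_le_of_ne ?_ ?_
  · show closure (f '' a.carrier) ⊆ closure (f '' b.carrier)
    exact closure_mono (Set.image_mono hab.le)
  · intro heq
    have hcar : closure (f '' a.carrier) = closure (f '' b.carrier) :=
      congrArg TopologicalSpace.IrreducibleCloseds.carrier heq
    have : a = b := SetLike.coe_injective (by rw [show (a : Set X) = a.carrier from rfl,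
      show (b : Set X) = b.carrier from rfl, key a, key b, hcar])
    exact hab.ne this

end AuxTopology

end AuxAlgebra

/-- An arithmetic scheme: a scheme that is separated and of finite type over `Spec ℤ`. -/
def IsArithmeticScheme (X : Scheme.{0}) : Prop :=
  ∃ f : X ⟶ Spec (CommRingCat.of ℤ),
    IsSeparated f ∧ LocallyOfFiniteType f ∧ QuasiCompact f

/-- For an arithmetic scheme `X` of Krull dimension at most one, the set `X(ℂ)` of
scheme morphisms `Spec ℂ → X` is finite. -/
theorem complex_points_finite_of_one_dimensional_arithmetic_scheme
    (X : Scheme.{0}) (hX : IsArithmeticScheme X) (hdim : topologicalKrullDim X ≤ 1) :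
    Finite (Spec (CommRingCat.of ℂ) ⟶ X) := by
  classical
  obtain ⟨f, -, hft, hqc⟩ := hX
  haveI : LocallyOfFiniteType f := hft
  haveI : QuasiCompact f := hqc
  haveI : CompactSpace X := QuasiCompact.compactSpace_of_compactSpace f
  -- an affine open cover
  have hcover : ∀ x : X, ∃ V : X.affineOpens, x ∈ V.1 := by
    intro x
    obtain ⟨V, hV, hxV, -⟩ := TopologicalSpace.Opens.isBasis_iff_nbhd.mp
      X.isBasis_affineOpens (U := ⊤) (x := x) trivial
    exact ⟨⟨V, hV⟩, hxV⟩
  choose V hV using hcover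
  obtain ⟨s, hs⟩ := IsCompact.elim_finite_subcover (isCompact_univ (X := X))
    (fun x : X => ((V x).1 : Set X)) (fun x => (V x).1.2)
    (fun y _ => Set.mem_iUnion.mpr ⟨y, hV y⟩)
  -- each affine piece has finitely many ℂ-points
  have haff : ∀ x : X, Finite (Spec (CommRingCat.of ℂ) ⟶ ((V x).1.toScheme)) := by
    intro x
    set R := Γ(X, (V x).1) with hR
    -- finite type
    have h1 : RingHom.FiniteType (f.appLE ⊤ (V x).1 (by simp)).hom :=
      HasRingHomProperty.appLE (P := @LocallyOfFiniteType) f hft ⟨⊤, isAffineOpen_top _⟩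
        (V x) (by simp)
    have h2 : RingHom.FiniteType
        ((f.appLE ⊤ (V x).1 (by simp)).hom.comp
          ((Scheme.ΓSpecIso (CommRingCat.of ℤ)).commRingCatIsoToRingEquiv.symm :
            (CommRingCat.of ℤ) →+* _)) :=
      h1.comp (RingHom.FiniteType.of_surjective _
        (Scheme.ΓSpecIso (CommRingCat.of ℤ)).commRingCatIsoToRingEquiv.symm.surjective)
    have hftR : Algebra.FiniteType ℤ ↑R := by
      have h3 : (algebraMap ℤ ↑R).FiniteType := by
        have := h2
        rwa [Subsingleton.elim (algebraMap ℤ ↑R)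
          ((f.appLE ⊤ (V x).1 (by simp)).hom.comp
            ((Scheme.ΓSpecIso (CommRingCat.of ℤ)).commRingCatIsoToRingEquiv.symm :
              (CommRingCat.of ℤ) →+* _))] 
      have h4 : (algebraMap ℤ ↑R).toAlgebra = (inferInstance : Algebra ℤ ↑R) :=
        Subsingleton.elim _ _
      rw [RingHom.FiniteType] at h3
      rwa [h4] at h3
    -- dimension
    have hdimR : ringKrullDim ↑R ≤ 1 := by
      have e : ((V x).1.toScheme) ≅ Spec R := (V x).2.isoSpec
      have h5 : topologicalKrullDim (PrimeSpectrum ↑R) = topologicalKrullDim ((V x).1.toScheme) :=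
        (IsHomeomorph.topologicalKrullDim_eq _ (Scheme.homeoOfIso e.symm).isHomeomorph)
      have h6 : topologicalKrullDim ((V x).1.toScheme) ≤ topologicalKrullDim X :=
        topologicalKrullDim_le_of_isEmbedding _ ((V x).1.ι.isOpenEmbedding.toIsEmbedding)
      rw [← PrimeSpectrum.topologicalKrullDim_eq_ringKrullDim, h5]
      exact le_trans h6 hdim
    have hfin : Finite (↑R →+* ℂ) := finite_ringHom_complex ↑R hftR hdimR
    have e1 : (Spec (CommRingCat.of ℂ) ⟶ ((V x).1.toScheme)) ≃ (Spec (CommRingCat.of ℂ) ⟶ Spec R) :=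
      Iso.homCongr (Iso.refl _) (V x).2.isoSpec
    have e2 : (Spec (CommRingCat.of ℂ) ⟶ Spec R) ≃ (R ⟶ CommRingCat.of ℂ) := Spec.homEquiv
    have e3 : (R ⟶ CommRingCat.of ℂ) ≃ (↑R →+* ℂ) :=
      ⟨fun g => g.hom, fun g => CommRingCat.ofHom g, fun _ => rfl, fun _ => rfl⟩
    exact Finite.of_equiv _ (e1.trans (e2.trans e3)).symm
  -- every ℂ-point factors through a member of the cover
  have hpt : ∀ g : Spec (CommRingCat.of ℂ) ⟶ X,
      ∃ x ∈ s, g.base (IsLocalRing.closedPoint ℂ) ∈ (V x).1 := by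
    intro g
    have := hs (Set.mem_univ (g.base (IsLocalRing.closedPoint ℂ)))
    simpa using this
  choose ix hixs hmem using hpt
  have hrange : ∀ g : Spec (CommRingCat.of ℂ) ⟶ X,
      Set.range g.base ⊆ Set.range ((V (ix g)).1.ι.base) := by
    intro g y hy
    obtain ⟨z, rfl⟩ := hy
    rw [Scheme.Opens.range_ι]
    have : z = IsLocalRing.closedPoint ℂ := Subsingleton.elim _ _
    rw [this]
    exact hmem g
  let Ψ : (Spec (CommRingCat.of ℂ) ⟶ X) →
      Σ x : ↥s, (Spec (CommRingCat.of ℂ) ⟶ ((V (x : X)).1.toScheme)) :=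
    fun g => ⟨⟨ix g, hixs g⟩, IsOpenImmersion.lift ((V (ix g)).1.ι) g (hrange g)⟩
  have hleft : ∀ g, ((Ψ g).2 ≫ (V ((Ψ g).1 : X)).1.ι) = g := by
    intro g
    exact IsOpenImmersion.lift_fac _ _ (hrange g)
  haveI : ∀ x : ↥s, Finite (Spec (CommRingCat.of ℂ) ⟶ ((V (x : X)).1.toScheme)) :=
    fun x => haff x
  refine Finite.of_injective Ψ (fun g₁ g₂ h => ?_)
  rw [← hleft g₁, ← hleft g₂, h]
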